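/- Let λ, a ∈ ℝⁿ with ‖λ‖ = ‖a‖ = 1, λ ≠ ±a, and d ∈ ℝᵐ with ‖d‖ < 1. Then the function φ_λ with φ_λ(y) = ‖y‖ if λᵀa‖y‖ + dᵀy ≤ 0, and φ_λ(y) = sqrt((‖y‖² − (dᵀy)²)(1 − (λᵀa)²)) − (dᵀy)(λᵀa) otherwise, is differentiable at every y ∈ ℝᵐ \ {0}; moreover on the set {y ≠ 0 : λᵀa‖y‖ + dᵀy = 0} both branches have gradient y/‖y‖. -/

import Mathlib

open RealInnerProductSpace

set_option linter.unusedSectionVars false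

section Aux
variable {E : Type*} [NormedAddCommGroup E] [InnerProductSpace ℝ E]

lemma norm_hasFDerivAt' {y : E} (hy : y ≠ 0) :
    HasFDerivAt (fun z : E => ‖z‖) (‖y‖⁻¹ • (innerSL ℝ y : E →L[ℝ] ℝ)) y := by
  have hny : ‖y‖ ≠ 0 := norm_ne_zero_iff.mpr hy
  have h1 : HasFDerivAt (fun z : E => ‖z‖ ^ 2) (2 • (innerSL ℝ y : E →L[ℝ] ℝ)) y :=
    (hasStrictFDerivAt_norm_sq y).hasFDerivAt
  have h2 : HasDerivAt Real.sqrt (1 / (2 * Real.sqrt (‖y‖ ^ 2))) (‖y‖ ^ 2) :=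
    Real.hasDerivAt_sqrt (by positivity)
  have h3 := h2.comp_hasFDerivAt y h1
  rw [show Real.sqrt ∘ (fun z : E => ‖z‖ ^ 2) = fun z : E => ‖z‖ from
    funext fun z => Real.sqrt_sq (norm_nonneg z)] at h3
  refine h3.congr_fderiv ?_
  rw [Real.sqrt_sq (norm_nonneg y)]
  ext z
  simp [smul_smul]
  ring_nf

lemma sandwich_hasFDerivAt {f₁ f₂ φ : E → ℝ} {L : E →L[ℝ] ℝ} {y : E}
    (h₁ : HasFDerivAt f₁ L y) (h₂ : HasFDerivAt f₂ L y)
    (e₁ : φ y = f₁ y) (e₂ : φ y = f₂ y)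
    (hm : ∀ z, φ z = f₁ z ∨ φ z = f₂ z) : HasFDerivAt φ L y := by
  rw [hasFDerivAt_iff_isLittleO_nhds_zero] at h₁ h₂ ⊢
  rw [Asymptotics.isLittleO_iff] at h₁ h₂ ⊢
  intro c hc
  filter_upwards [h₁ hc, h₂ hc] with h hh1 hh2
  rcases hm (y + h) with e | e
  · rw [e, e₁]; exact hh1
  · rw [e, e₂]; exact hh2

end Aux

theorem phi_differentiable {n m : ℕ}
    (lam a : EuclideanSpace ℝ (Fin n)) (d : EuclideanSpace ℝ (Fin m))
    (hlam : ‖lam‖ = 1) (ha : ‖a‖ = 1)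
    (hne : lam ≠ a) (hne' : lam ≠ -a) (hd : ‖d‖ < 1)
    (φ : EuclideanSpace ℝ (Fin m) → ℝ)
    (hφ : ∀ y, φ y =
      if ⟪lam, a⟫ * ‖y‖ + ⟪d, y⟫ ≤ 0 then ‖y‖
      else Real.sqrt ((‖y‖ ^ 2 - ⟪d, y⟫ ^ 2) * (1 - ⟪lam, a⟫ ^ 2)) - ⟪d, y⟫ * ⟪lam, a⟫) :
    (∀ y : EuclideanSpace ℝ (Fin m), y ≠ 0 → DifferentiableAt ℝ φ y) ∧
    ∀ y : EuclideanSpace ℝ (Fin m), y ≠ 0 → ⟪lam, a⟫ * ‖y‖ + ⟪d, y⟫ = 0 →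
      HasGradientAt (fun z : EuclideanSpace ℝ (Fin m) => ‖z‖) (‖y‖⁻¹ • y) y ∧
      HasGradientAt (fun z : EuclideanSpace ℝ (Fin m) =>
          Real.sqrt ((‖z‖ ^ 2 - ⟪d, z⟫ ^ 2) * (1 - ⟪lam, a⟫ ^ 2)) - ⟪d, z⟫ * ⟪lam, a⟫)
        (‖y‖⁻¹ • y) y := by
  set c : ℝ := ⟪lam, a⟫ with hc_def
  have hc1 : c < 1 := (inner_lt_one_iff_real_of_norm_eq_one hlam ha).mpr hne
  have hc2 : -1 < c := by
    have h := (inner_lt_one_iff_real_of_norm_eq_one hlam (by rw [norm_neg]; exact ha)).mpr hne'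
    rw [inner_neg_right] at h
    linarith
  have hcpos : (0:ℝ) < 1 - c ^ 2 := by nlinarith
  have hd2 : ‖d‖ ^ 2 < 1 := by nlinarith [norm_nonneg d]
  have harg : ∀ z : EuclideanSpace ℝ (Fin m), z ≠ 0 →
      0 < (‖z‖ ^ 2 - ⟪d, z⟫ ^ 2) * (1 - c ^ 2) := by
    intro z hz
    have h1 : |⟪d, z⟫| ≤ ‖d‖ * ‖z‖ := abs_real_inner_le_norm d z
    have h2 : (0:ℝ) < ‖z‖ := norm_pos_iff.mpr hz
    have h3 : ⟪d, z⟫ ^ 2 ≤ (‖d‖ * ‖z‖) ^ 2 := by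
      rw [← sq_abs]; exact pow_le_pow_left₀ (abs_nonneg _) h1 2
    have h4 : (‖d‖ * ‖z‖) ^ 2 < ‖z‖ ^ 2 := by nlinarith [pow_pos h2 2]
    nlinarith
  set g : EuclideanSpace ℝ (Fin m) → ℝ := fun z =>
    Real.sqrt ((‖z‖ ^ 2 - ⟪d, z⟫ ^ 2) * (1 - c ^ 2)) - ⟪d, z⟫ * c with hg_def
  have hg_diff : ∀ z : EuclideanSpace ℝ (Fin m), z ≠ 0 → DifferentiableAt ℝ g z := by
    intro z hz
    have hdz : DifferentiableAt ℝ (fun w : EuclideanSpace ℝ (Fin m) => ⟪d, w⟫) z :=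
      (innerSL ℝ d).differentiableAt
    have h1 : DifferentiableAt ℝ
        (fun w : EuclideanSpace ℝ (Fin m) => (‖w‖ ^ 2 - ⟪d, w⟫ ^ 2) * (1 - c ^ 2)) z :=
      ((differentiableAt_fun_id.norm_sq ℝ).sub (hdz.pow 2)).mul_const _
    exact (h1.sqrt (ne_of_gt (harg z hz))).sub (hdz.mul_const c)
  have hg_deriv : ∀ y : EuclideanSpace ℝ (Fin m), y ≠ 0 → c * ‖y‖ + ⟪d, y⟫ = 0 →
      HasFDerivAt g (‖y‖⁻¹ • (innerSL ℝ y : EuclideanSpace ℝ (Fin m) →L[ℝ] ℝ)) y := by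
    intro y hy hbd
    have hny : ‖y‖ ≠ 0 := norm_ne_zero_iff.mpr hy
    have hpos : (0:ℝ) < ‖y‖ := norm_pos_iff.mpr hy
    have ht : ⟪d, y⟫ = -(c * ‖y‖) := by linarith
    have hdz : HasFDerivAt (fun w : EuclideanSpace ℝ (Fin m) => ⟪d, w⟫)
        (innerSL ℝ d : EuclideanSpace ℝ (Fin m) →L[ℝ] ℝ) y := (innerSL ℝ d).hasFDerivAt
    have hn2 : HasFDerivAt (fun w : EuclideanSpace ℝ (Fin m) => ‖w‖ ^ 2)
        (2 • (innerSL ℝ y : EuclideanSpace ℝ (Fin m) →L[ℝ] ℝ)) y :=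
      (hasStrictFDerivAt_norm_sq y).hasFDerivAt
    have hdz2 : HasFDerivAt (fun w : EuclideanSpace ℝ (Fin m) => ⟪d, w⟫ ^ 2)
        ((2 * ⟪d, y⟫) • (innerSL ℝ d : EuclideanSpace ℝ (Fin m) →L[ℝ] ℝ)) y := by
      have h := hdz.mul hdz
      have heq : (fun w : EuclideanSpace ℝ (Fin m) => ⟪d, w⟫ ^ 2)
          = fun w : EuclideanSpace ℝ (Fin m) => ⟪d, w⟫ * ⟪d, w⟫ := funext fun w => sq _
      rw [heq]
      refine h.congr_fderiv ?_
      ext z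
      simp
      ring
    have hu := (hn2.sub hdz2).mul_const (1 - c ^ 2)
    have huy : (‖y‖ ^ 2 - ⟪d, y⟫ ^ 2) * (1 - c ^ 2) = (‖y‖ * (1 - c ^ 2)) ^ 2 := by
      rw [ht]; ring
    have hsqrt : HasDerivAt Real.sqrt (1 / (2 * (‖y‖ * (1 - c ^ 2))))
        ((‖y‖ ^ 2 - ⟪d, y⟫ ^ 2) * (1 - c ^ 2)) := by
      have h := Real.hasDerivAt_sqrt (x := (‖y‖ ^ 2 - ⟪d, y⟫ ^ 2) * (1 - c ^ 2))
        (ne_of_gt (harg y hy))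
      have hs : Real.sqrt ((‖y‖ ^ 2 - ⟪d, y⟫ ^ 2) * (1 - c ^ 2)) = ‖y‖ * (1 - c ^ 2) := by
        rw [huy]; exact Real.sqrt_sq (by positivity)
      rwa [hs] at h
    have h5 := (hsqrt.comp_hasFDerivAt y hu).sub (hdz.mul_const c)
    refine h5.congr_fderiv ?_
    ext z
    simp [smul_smul, ht]
    field_simp
    ring
  have hmem : ∀ z : EuclideanSpace ℝ (Fin m), φ z = ‖z‖ ∨ φ z = g z := by
    intro z
    rw [hφ z]
    by_cases h : c * ‖z‖ + ⟪d, z⟫ ≤ 0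
    · left; rw [if_pos h]
    · right; rw [if_neg h]
  have hbd_eq : ∀ y : EuclideanSpace ℝ (Fin m), y ≠ 0 → c * ‖y‖ + ⟪d, y⟫ = 0 → g y = ‖y‖ := by
    intro y hy hbd
    have ht : ⟪d, y⟫ = -(c * ‖y‖) := by linarith
    have huy : (‖y‖ ^ 2 - ⟪d, y⟫ ^ 2) * (1 - c ^ 2) = (‖y‖ * (1 - c ^ 2)) ^ 2 := by
      rw [ht]; ring
    have hpos : (0:ℝ) < ‖y‖ := norm_pos_iff.mpr hy
    rw [hg_def]
    simp only
    rw [huy, Real.sqrt_sq (by positivity), ht]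
    ring
  have toDual_eq : ∀ y : EuclideanSpace ℝ (Fin m),
      (InnerProductSpace.toDual ℝ (EuclideanSpace ℝ (Fin m))) (‖y‖⁻¹ • y)
      = ‖y‖⁻¹ • (innerSL ℝ y : EuclideanSpace ℝ (Fin m) →L[ℝ] ℝ) := by
    intro y; ext z
    simp [InnerProductSpace.toDual_apply_apply, real_inner_smul_left]
  constructor
  · intro y hy
    have hcont : ContinuousAt (fun z : EuclideanSpace ℝ (Fin m) => c * ‖z‖ + ⟪d, z⟫) y :=
      ((continuous_const.mul continuous_norm).add (innerSL ℝ d).continuous).continuousAt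
    rcases lt_trichotomy (c * ‖y‖ + ⟪d, y⟫) 0 with hlt | heq | hgt
    · have hev : φ =ᶠ[nhds y] fun z => ‖z‖ := by
        filter_upwards [hcont.eventually_lt continuousAt_const hlt] with z hz
        rw [hφ z]; exact if_pos (le_of_lt hz)
      exact (differentiableAt_fun_id.norm ℝ hy).congr_of_eventuallyEq hev
    · have h₁ := norm_hasFDerivAt' hy
      have h₂ := hg_deriv y hy heq
      have e₁ : φ y = ‖y‖ := by rw [hφ y]; exact if_pos (le_of_eq heq)
      have e₂ : φ y = g y := by rw [e₁, hbd_eq y hy heq]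
      exact (sandwich_hasFDerivAt h₁ h₂ e₁ e₂ hmem).differentiableAt
    · have hev : φ =ᶠ[nhds y] g := by
        filter_upwards [continuousAt_const.eventually_lt hcont hgt] with z hz
        rw [hφ z]; exact if_neg (not_le.mpr hz)
      exact (hg_diff y hy).congr_of_eventuallyEq hev
  · intro y hy hbd
    constructor
    · show HasFDerivAt _ _ _
      rw [toDual_eq y]
      exact norm_hasFDerivAt' hy
    · show HasFDerivAt _ _ _
      rw [toDual_eq y]
      exact hg_deriv y hy hbd
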